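/- Every split local symmetric k-algebra of dimension 5 over an algebraically closed field k is commutative. -/

import Mathlib

open Submodule Module

namespace Stmt3Aux

variable {k R : Type*} [Field k] [Ring R] [Algebra k R]

/-- commutators with central summands cancel -/
lemma comm_cancel {z1 z2 : R} (hz1 : ∀ r, z1 * r = r * z1) (hz2 : ∀ r, z2 * r = r * z2)
    (p q : R) : (p + z1) * (q + z2) - (q + z2) * (p + z1) = p * q - q * p := by
  simp only [mul_add, add_mul]
  rw [hz1 q, hz2 p, hz1 z2]
  abel

lemma comm_smul (x y : R) (α β α' β' : k) :
    (α • x + β • y) * (α' • x + β' • y) - (α' • x + β' • y) * (α • x + β • y)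
      = (α * β' - β * α') • (x * y - y * x) := by
  simp only [mul_add, add_mul, smul_mul_assoc, mul_smul_comm, smul_smul]
  match_scalars <;> ring

lemma comm_expand (w c c' : R) (γ γ' : k) :
    (γ • w + c) * (γ' • w + c') - (γ' • w + c') * (γ • w + c)
      = γ • (w * c' - c' * w) + γ' • (c * w - w * c) + (c * c' - c' * c) := by
  simp only [mul_add, add_mul, smul_mul_assoc, mul_smul_comm, smul_smul, smul_sub]
  match_scalars <;> ring

lemma comm_span {X : Set R} (hX : ∀ u ∈ X, ∀ v ∈ X, u * v = v * u) :
    ∀ a ∈ span k X, ∀ b ∈ span k X, a * b = b * a := by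
  intro a ha
  refine span_induction (p := fun a _ => ∀ b ∈ span k X, a * b = b * a)
    (fun u hu b hb => ?_) (by simp) (fun x y _ _ hx hy b hb => by
      show (x + y) * b = b * (x + y)
      rw [add_mul, mul_add, hx b hb, hy b hb]) (fun c x _ hx b hb => by
      show (c • x) * b = b * (c • x)
      rw [smul_mul_assoc, mul_smul_comm, hx b hb]) ha
  refine span_induction (p := fun b _ => u * b = b * u) (fun v hv => hX u hu v hv)
    (by simp) (fun x y _ _ hx hy => by
      show u * (x + y) = (x + y) * u
      rw [mul_add, add_mul, show u * x = x * u from hx, show u * y = y * u from hy])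
    (fun c x _ hx => by
      show u * (c • x) = (c • x) * u
      rw [mul_smul_comm, smul_mul_assoc, show u * x = x * u from hx]) hb

lemma dim_sup_singleton [FiniteDimensional k R] {v : R} {W : Submodule k R} (hv : v ∉ W) :
    finrank k ↥(span k {v} ⊔ W) = finrank k ↥W + 1 := by
  have hv0 : v ≠ 0 := fun h => hv (h ▸ W.zero_mem)
  have hinf : span k {v} ⊓ W = ⊥ := by
    rw [eq_bot_iff]
    rintro t ⟨ht1, ht2⟩
    obtain ⟨a, rfl⟩ := mem_span_singleton.mp ht1
    rcases eq_or_ne a 0 with h | h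
    · simp [h]
    · exact absurd (by simpa [smul_smul, inv_mul_cancel₀ h] using W.smul_mem a⁻¹ ht2) hv
  have h := Submodule.finrank_sup_add_finrank_inf_eq (span k {v}) W
  rw [hinf, finrank_bot, finrank_span_singleton hv0] at h
  omega

variable {J : Submodule k R}

section
variable (hl : ∀ (r x : R), x ∈ J → r * x ∈ J) (hr : ∀ (r x : R), x ∈ J → x * r ∈ J)
  (hinv : ∀ x ∈ J, ∃ z : R, z * (1 - x) = 1)

include hl hr hinv in
set_option linter.unusedSectionVars false in
lemma nak : ∀ (n : ℕ) (S : Finset R), S.card ≤ n →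
    (∀ x ∈ S, x ∈ J * (span R (S : Set R)).restrictScalars k) →
    span R (S : Set R) = ⊥ := by
  classical
  intro n
  induction n with
  | zero =>
    intro S hS _
    obtain rfl : S = ∅ := Finset.card_eq_zero.mp (Nat.le_zero.mp hS)
    simp
  | succ n ih =>
    intro S hS hmem
    rcases eq_or_ne S ∅ with rfl | hSne
    · simp [Finset.coe_empty]
    obtain ⟨x, hxS⟩ := Finset.nonempty_iff_ne_empty.mpr hSne
    set E := S.erase x with hE
    have key : J * (span R (S : Set R)).restrictScalars k ≤
        J.map (LinearMap.mulRight k x) ⊔ (span R (E : Set R)).restrictScalars k := by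
      rw [Submodule.mul_le]
      intro a ha nn hn
      have hn' : nn ∈ span R (S : Set R) := hn
      revert a ha
      refine span_induction (p := fun nn _ => ∀ a ∈ J, a * nn ∈
        J.map (LinearMap.mulRight k x) ⊔ (span R (E : Set R)).restrictScalars k)
        ?_ (by simp) ?_ ?_ hn'
      · intro t ht a ha
        rcases eq_or_ne t x with rfl | htx
        · exact Submodule.mem_sup_left ⟨a, ha, rfl⟩
        · refine Submodule.mem_sup_right ?_
          have : t ∈ span R (E : Set R) := subset_span (by simp [hE, Finset.mem_erase, htx, ht])
          simpa [smul_eq_mul] using Submodule.smul_mem _ a this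
      · intro u v _ _ hu hv a ha
        rw [mul_add]
        exact add_mem (hu a ha) (hv a ha)
      · intro r u _ hu a ha
        rw [smul_eq_mul, ← mul_assoc]
        exact hu (a * r) (hr r a ha)
    have hx' := key (hmem x hxS)
    obtain ⟨u, hu, y, hy, hxy⟩ := Submodule.mem_sup.mp hx'
    obtain ⟨b, hb, rfl⟩ := hu
    have hy' : y ∈ span R (E : Set R) := hy
    obtain ⟨z, hz⟩ := hinv b hb
    have hbx : LinearMap.mulRight k x b = b * x := rfl
    have hxE : x ∈ span R (E : Set R) := by
      have h1 : (1 - b) * x = y := by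
        rw [hbx] at hxy
        rw [sub_mul, one_mul]
        exact (eq_sub_of_add_eq' hxy).symm
      have : x = z * y := by
        calc x = 1 * x := (one_mul x).symm
        _ = z * (1 - b) * x := by rw [hz]
        _ = z * ((1 - b) * x) := by rw [mul_assoc]
        _ = z * y := by rw [h1]
      rw [this]
      simpa [smul_eq_mul] using Submodule.smul_mem _ z hy'
    have hspan : span R (S : Set R) = span R (E : Set R) := by
      refine le_antisymm (span_le.mpr ?_) (span_mono (by rw [hE]; exact_mod_cast Finset.erase_subset x S))
      intro t ht
      rcases eq_or_ne t x with rfl | htx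
      · exact hxE
      · exact subset_span (by simp [hE, Finset.mem_erase, htx, ht])
    have hcard : E.card ≤ n := by
      have hpos : 0 < S.card := Finset.card_pos.mpr ⟨x, hxS⟩
      have hc2 : E.card = S.card - 1 := by rw [hE]; exact Finset.card_erase_of_mem hxS
      omega
    have := ih E hcard (fun t ht => by
      have htS : t ∈ S := Finset.mem_of_mem_erase ht
      have := hmem t htS
      rwa [hspan] at this)
    rw [hspan, this]

include hl hr in
lemma pow_absorb (i : ℕ) : ∀ x ∈ J ^ (i + 1), ∀ r : R, r * x ∈ J ^ (i + 1) ∧ x * r ∈ J ^ (i + 1) := by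
  induction i with
  | zero => intro x hx r; rw [pow_one] at *; exact ⟨hl r x hx, hr r x hx⟩
  | succ i ih =>
    intro x hx r
    rw [pow_succ] at hx ⊢
    constructor
    · refine Submodule.mul_induction_on (C := fun x => r * x ∈ J ^ (i+1) * J) hx ?_ ?_
      · intro m hm n hn
        rw [← mul_assoc]
        exact Submodule.mul_mem_mul ((ih m hm r).1) hn
      · intro u v hu hv; rw [mul_add]; exact add_mem hu hv
    · refine Submodule.mul_induction_on (C := fun x => x * r ∈ J ^ (i+1) * J) hx ?_ ?_
      · intro m hm n hn
        rw [mul_assoc]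
        exact Submodule.mul_mem_mul hm (hr r n hn)
      · intro u v hu hv; rw [add_mul]; exact add_mem hu hv

include hl hr in
lemma pow_succ_le (i : ℕ) : J ^ (i + 2) ≤ J ^ (i + 1) := by
  rw [pow_succ]
  rw [Submodule.mul_le]
  intro m hm n hn
  exact (pow_absorb hl hr i m hm n).2

include hl hr hinv in
lemma pow_bot [FiniteDimensional k R] (i : ℕ) (h : J ^ (i + 2) = J ^ (i + 1)) :
    J ^ (i + 1) = ⊥ := by
  obtain ⟨S, hS⟩ : (J ^ (i + 1)).FG := IsNoetherian.noetherian _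
  have h1 : J ^ (i + 1) ≤ (span R (S : Set R)).restrictScalars k := by
    rw [← hS]
    exact Submodule.span_le_restrictScalars k R (S : Set R)
  have hnk := nak hl hr hinv S.card S le_rfl (fun t ht => by
    have htJ : t ∈ J ^ (i + 2) := by
      rw [h, ← hS]
      exact subset_span ht
    rw [pow_succ'] at htJ
    exact mul_le_mul' le_rfl h1 htJ)
  rw [eq_bot_iff]
  intro t ht
  have := h1 ht
  rw [hnk] at this
  simpa using this

end

end Stmt3Aux

open Stmt3Aux

/-- Every split local symmetric algebra of dimension `5` over an algebraically closed
field `k` is commutative. -/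
theorem stmt_3 (k R : Type*) [Field k] [IsAlgClosed k] [Ring R] [Algebra k R]
    [IsLocalRing R]
    (hdim : Module.finrank k R = 5)
    (hsplit : ∀ r : R, ∃ c : k, r - algebraMap k R c ∈ (⊥ : Ideal R).jacobson)
    (s : R →ₗ[k] k)
    (hsymm : ∀ a b : R, s (a * b) = s (b * a))
    (hfaith : ∀ I : Ideal R, (∀ x ∈ I, s x = 0) → I = ⊥) :
    ∀ a b : R, a * b = b * a := by
  haveI hfd : FiniteDimensional k R := FiniteDimensional.of_finrank_pos (by omega)
  set J : Submodule k R := ((⊥ : Ideal R).jacobson).restrictScalars k with hJdef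
  have hl : ∀ (r x : R), x ∈ J → r * x ∈ J := fun r x hx => Ideal.mul_mem_left _ r hx
  have hinv : ∀ x ∈ J, ∃ z : R, z * (1 - x) = 1 := by
    intro x hx
    obtain ⟨z, hz⟩ := Ideal.mem_jacobson_iff.mp hx (-1)
    rw [mul_neg_one, neg_mul] at hz
    have h0 : -(z * x) + z - 1 = 0 := Ideal.mem_bot.mp hz
    refine ⟨z, ?_⟩
    calc z * (1 - x) = z - z * x := by rw [mul_sub, mul_one]
    _ = -(z * x) + z := (neg_add_eq_sub _ _).symm
    _ = 1 := sub_eq_zero.mp h0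
  have hsp : ∀ r : R, ∃ c : k, ∃ j ∈ J, r = c • (1 : R) + j := by
    intro r
    obtain ⟨c, hc⟩ := hsplit r
    rw [Algebra.algebraMap_eq_smul_one] at hc
    exact ⟨c, r - c • 1, hc, by abel⟩
  have hr_ : ∀ (r x : R), x ∈ J → x * r ∈ J := by
    intro r x hx
    obtain ⟨c, j, hj, rfl⟩ := hsp r
    rw [mul_add, mul_smul_comm, mul_one]
    exact add_mem (J.smul_mem c hx) (hl x j hj)
  have hJtop : J ≠ ⊤ := by
    intro h
    have h1 : (1 : R) ∈ J := h ▸ Submodule.mem_top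
    have h2 : (⊥ : Ideal R).jacobson = ⊤ := (Ideal.eq_top_iff_one _).mpr h1
    have h3 : (⊥ : Ideal R) = ⊤ := Ideal.jacobson_eq_top_iff.mp h2
    have h4 : (1 : R) ∈ (⊥ : Ideal R) := h3 ▸ Submodule.mem_top
    exact one_ne_zero (Ideal.mem_bot.mp h4)
  have h4 : finrank k ↥J = 4 := by
    have hlt : finrank k ↥J < 5 := hdim ▸ Submodule.finrank_lt hJtop
    have hge : (⊤ : Submodule k R) ≤ span k {(1 : R)} ⊔ J := by
      intro r _
      obtain ⟨c, j, hj, rfl⟩ := hsp r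
      exact Submodule.add_mem_sup (Submodule.smul_mem _ c (mem_span_singleton_self 1)) hj
    have h5top : finrank k ↥(⊤ : Submodule k R) = 5 := by rw [finrank_top, hdim]
    have hsup := Submodule.finrank_sup_add_finrank_inf_eq (span k {(1 : R)}) J
    have hs1 : finrank k ↥(span k {(1 : R)}) = 1 := finrank_span_singleton one_ne_zero
    have hmono := Submodule.finrank_mono hge
    have hle2 : finrank k ↥(span k {(1 : R)} ⊔ J) ≤ 5 := hdim ▸ Submodule.finrank_le _
    omega
  -- the symmetrising bilinear form
  set B : LinearMap.BilinForm k R := (LinearMap.mul k R).compr₂ s with hBdef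
  have hB : ∀ a b : R, B a b = s (a * b) := fun a b => rfl
  have hkill : ∀ x : R, (∀ y, s (x * y) = 0) → x = 0 := by
    intro x hx
    have h : Ideal.span {x} = ⊥ := by
      refine hfaith _ ?_
      intro t ht
      obtain ⟨r, rfl⟩ := mem_span_singleton.mp ht
      rw [smul_eq_mul, hsymm]
      exact hx r
    exact Ideal.mem_bot.mp (h ▸ Ideal.subset_span rfl)
  have hBnd : B.Nondegenerate := ⟨fun x hx => hkill x fun y => hx y,
    fun y hy => hkill y fun x => by rw [hsymm]; exact hy x⟩
  have hrefl : B.IsRefl := by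
    intro x y h
    rw [hB, hsymm] at h
    exact h
  set Soc := B.orthogonal J with hSdef
  have hsoc1 : finrank k ↥Soc = 1 := by
    rw [hSdef, LinearMap.BilinForm.finrank_orthogonal hBnd J, hdim, h4]
  have hsocmem : ∀ x : R, (∀ j ∈ J, x * j = 0) → x ∈ Soc := by
    intro x h
    rw [hSdef, LinearMap.BilinForm.mem_orthogonal_iff]
    intro n hn
    show B n x = 0
    rw [hB, hsymm, h n hn, map_zero]
  have hsoczero : ∀ x ∈ Soc, s x = 0 → x = 0 := by
    intro x hx hsx
    rw [hSdef, LinearMap.BilinForm.mem_orthogonal_iff] at hx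
    have hxJ : ∀ j ∈ J, s (x * j) = 0 := fun j hj => by
      rw [hsymm]; exact hx j hj
    have hJx : ∀ j ∈ J, j * x = 0 := by
      intro j hj
      apply hkill
      intro y
      calc s (j * x * y) = s (x * y * j) := by rw [mul_assoc, hsymm]
      _ = s (x * (y * j)) := by rw [mul_assoc]
      _ = 0 := hxJ _ (hl y j hj)
    have h : Ideal.span {x} = ⊥ := by
      refine hfaith _ ?_
      intro t ht
      obtain ⟨r, rfl⟩ := mem_span_singleton.mp ht
      obtain ⟨c, j, hj, rfl⟩ := hsp r
      rw [smul_eq_mul, add_mul, smul_mul_assoc, one_mul, hJx j hj, add_zero, map_smul, hsx,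
        smul_zero]
    exact Ideal.mem_bot.mp (h ▸ Ideal.subset_span rfl)
  -- the commutator subspace
  set K : Submodule k R := span k {t : R | ∃ a b : R, a * b - b * a = t} with hKdef
  have hone_c : ∀ (c : k) (r : R), (c • (1 : R)) * r = r * (c • (1 : R)) := by
    intro c r
    rw [smul_mul_assoc, mul_smul_comm, one_mul, mul_one]
  have hKJ2 : K ≤ J ^ 2 := by
    rw [hKdef, span_le]
    rintro t ⟨a, b, rfl⟩
    obtain ⟨c, a', ha', rfl⟩ := hsp a
    obtain ⟨d, b', hb', rfl⟩ := hsp b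
    have heq : (c • (1:R) + a') * (d • (1:R) + b') - (d • (1:R) + b') * (c • (1:R) + a')
        = a' * b' - b' * a' := by
      rw [add_comm (c • (1:R)) a', add_comm (d • (1:R)) b']
      exact comm_cancel (hone_c c) (hone_c d) a' b'
    show _ ∈ (J ^ 2 : Submodule k R)
    rw [heq, pow_two]
    exact sub_mem (Submodule.mul_mem_mul ha' hb') (Submodule.mul_mem_mul hb' ha')
  -- powers of J
  have hJ21 : (J ^ 2 : Submodule k R) ≤ J := by
    have h := pow_succ_le hl hr_ 0
    rw [pow_one] at h
    exact h
  have hdesc : ∀ i : ℕ, (J ^ (i + 1) : Submodule k R) ≠ ⊥ →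
      finrank k ↥(J ^ (i + 2) : Submodule k R) < finrank k ↥(J ^ (i + 1) : Submodule k R) := by
    intro i hne
    rcases lt_or_eq_of_le (Submodule.finrank_mono (pow_succ_le hl hr_ i)) with h | h
    · exact h
    · exact absurd (pow_bot hl hr_ hinv i
        (Submodule.eq_of_le_of_finrank_le (pow_succ_le hl hr_ i) h.symm.le)) hne
  have hbotsucc : ∀ i : ℕ, (J ^ (i + 1) : Submodule k R) = ⊥ →
      (J ^ (i + 2) : Submodule k R) = ⊥ := by
    intro i h
    rw [pow_succ, h, bot_mul]
  have hf1 : finrank k ↥(J ^ 1 : Submodule k R) = 4 := by rw [pow_one]; exact h4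
  have hJ5 : (J ^ 5 : Submodule k R) = ⊥ := by
    by_contra h5
    have h4ne : (J ^ 4 : Submodule k R) ≠ ⊥ := fun hb => h5 (hbotsucc 3 hb)
    have h3ne : (J ^ 3 : Submodule k R) ≠ ⊥ := fun hb => h4ne (hbotsucc 2 hb)
    have h2ne : (J ^ 2 : Submodule k R) ≠ ⊥ := fun hb => h3ne (hbotsucc 1 hb)
    have h1ne : (J ^ 1 : Submodule k R) ≠ ⊥ := fun hb => h2ne (hbotsucc 0 hb)
    have d1 : finrank k ↥(J ^ 2 : Submodule k R) < finrank k ↥(J ^ 1 : Submodule k R) :=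
      hdesc 0 h1ne
    have d2 : finrank k ↥(J ^ 3 : Submodule k R) < finrank k ↥(J ^ 2 : Submodule k R) :=
      hdesc 1 h2ne
    have d3 : finrank k ↥(J ^ 4 : Submodule k R) < finrank k ↥(J ^ 3 : Submodule k R) :=
      hdesc 2 h3ne
    have d4 : finrank k ↥(J ^ 5 : Submodule k R) < finrank k ↥(J ^ 4 : Submodule k R) :=
      hdesc 3 h4ne
    have h50 : finrank k ↥(J ^ 5 : Submodule k R) = 0 := by omega
    exact h5 (Submodule.finrank_eq_zero.mp h50)
  -- main goal
  intro a b
  have hgoal : a * b - b * a = 0 → a * b = b * a := sub_eq_zero.mp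
  have hw : a * b - b * a ∈ K := by
    rw [hKdef]
    exact subset_span ⟨a, b, rfl⟩
  have hsw : s (a * b - b * a) = 0 := by rw [map_sub, hsymm, sub_self]
  set n2 := finrank k ↥(J ^ 2 : Submodule k R) with hn2
  have hn2le4 : n2 ≤ 4 := by
    have := Submodule.finrank_mono hJ21
    omega
  have hn2ne4 : n2 ≠ 4 := by
    intro hh
    have hle : finrank k ↥J ≤ finrank k ↥(J ^ 2 : Submodule k R) := by omega
    have hJ2J : (J ^ 2 : Submodule k R) = J := Submodule.eq_of_le_of_finrank_le hJ21 hle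
    have hb : (J ^ 1 : Submodule k R) = ⊥ := by
      refine pow_bot hl hr_ hinv 0 ?_
      rw [pow_one]
      exact hJ2J
    rw [pow_one] at hb
    rw [hb, finrank_bot] at h4
    omega
  have hcases : n2 = 0 ∨ n2 = 1 ∨ n2 = 2 ∨ n2 = 3 := by omega
  rcases hcases with h0 | h1 | h2 | h3
  · -- J² = 0
    have hJ2bot : (J ^ 2 : Submodule k R) = ⊥ := Submodule.finrank_eq_zero.mp (by omega)
    have := hKJ2 hw
    rw [hJ2bot] at this
    exact hgoal ((Submodule.mem_bot _).mp this)
  · -- dim J² = 1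
    have h2ne : (J ^ 2 : Submodule k R) ≠ ⊥ := by
      intro hb
      rw [hb, finrank_bot] at hn2
      omega
    have hd2 : finrank k ↥(J ^ 3 : Submodule k R) < finrank k ↥(J ^ 2 : Submodule k R) :=
      hdesc 1 h2ne
    have hJ3 : (J ^ 3 : Submodule k R) = ⊥ := Submodule.finrank_eq_zero.mp (by omega)
    have hsoc : (J ^ 2 : Submodule k R) ≤ Soc := by
      intro x hx
      refine hsocmem x fun j hj => ?_
      have hm : x * j ∈ (J ^ 3 : Submodule k R) := by
        have e : (J ^ 3 : Submodule k R) = J ^ 2 * J := pow_succ J 2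
        rw [e]
        exact Submodule.mul_mem_mul hx hj
      rw [hJ3] at hm
      exact (Submodule.mem_bot _).mp hm
    exact hgoal (hsoczero _ (hsoc (hKJ2 hw)) hsw)
  · -- dim J² = 2 : the hard case
    have h2ne : (J ^ 2 : Submodule k R) ≠ ⊥ := by
      intro hb
      rw [hb, finrank_bot] at hn2
      omega
    have hd2 : finrank k ↥(J ^ 3 : Submodule k R) < finrank k ↥(J ^ 2 : Submodule k R) :=
      hdesc 1 h2ne
    have h3ne : (J ^ 3 : Submodule k R) ≠ ⊥ := by
      intro hb
      have hsoc : (J ^ 2 : Submodule k R) ≤ Soc := by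
        intro x hx
        refine hsocmem x fun j hj => ?_
        have hm : x * j ∈ (J ^ 3 : Submodule k R) := by
          have e : (J ^ 3 : Submodule k R) = J ^ 2 * J := pow_succ J 2
          rw [e]
          exact Submodule.mul_mem_mul hx hj
        rw [hb] at hm
        exact (Submodule.mem_bot _).mp hm
      have := Submodule.finrank_mono hsoc
      rw [hsoc1] at this
      omega
    have hf3 : finrank k ↥(J ^ 3 : Submodule k R) = 1 := by
      have hne0 : finrank k ↥(J ^ 3 : Submodule k R) ≠ 0 :=
        fun hh => h3ne (Submodule.finrank_eq_zero.mp hh)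
      omega
    have hd3 : finrank k ↥(J ^ 4 : Submodule k R) < finrank k ↥(J ^ 3 : Submodule k R) :=
      hdesc 2 h3ne
    have hJ4 : (J ^ 4 : Submodule k R) = ⊥ := Submodule.finrank_eq_zero.mp (by omega)
    have hJ3soc : (J ^ 3 : Submodule k R) ≤ Soc := by
      intro x hx
      refine hsocmem x fun j hj => ?_
      have hm : x * j ∈ (J ^ 4 : Submodule k R) := by
        have e : (J ^ 4 : Submodule k R) = J ^ 3 * J := pow_succ J 3
        rw [e]
        exact Submodule.mul_mem_mul hx hj
      rw [hJ4] at hm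
      exact (Submodule.mem_bot _).mp hm
    -- the centre
    set Z : Submodule k R :=
      { carrier := {z : R | ∀ r, z * r = r * z}
        zero_mem' := fun r => by rw [zero_mul, mul_zero]
        add_mem' := fun hu hv r => by rw [add_mul, mul_add, hu r, hv r]
        smul_mem' := fun c u hu r => by rw [smul_mul_assoc, mul_smul_comm, hu r] } with hZdef
    have hmemZ : ∀ z : R, z ∈ Z ↔ ∀ r, z * r = r * z := fun z => Iff.rfl
    have hZorth : B.orthogonal K = Z := by
      apply le_antisymm
      · intro z hz
        rw [hmemZ]
        intro r
        rw [← sub_eq_zero]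
        apply hkill
        intro y
        have hKy : r * y - y * r ∈ K := by
          rw [hKdef]; exact subset_span ⟨r, y, rfl⟩
        have h0 : s ((r * y - y * r) * z) = 0 := hz _ hKy
        calc s ((z * r - r * z) * y) = s (z * r * y) - s (r * z * y) := by
              rw [sub_mul, map_sub]
        _ = s (r * y * z) - s (y * r * z) := by
              congr 1
              · calc s (z * r * y) = s (z * (r * y)) := by rw [mul_assoc]
                _ = s (r * y * z) := hsymm _ _
              · calc s (r * z * y) = s (r * (z * y)) := by rw [mul_assoc]
                _ = s (z * y * r) := hsymm _ _
                _ = s (z * (y * r)) := by rw [mul_assoc]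
                _ = s (y * r * z) := hsymm _ _
        _ = s ((r * y - y * r) * z) := by rw [sub_mul, map_sub]
        _ = 0 := h0
      · intro z hz
        rw [LinearMap.BilinForm.mem_orthogonal_iff]
        intro n hn
        show B n z = 0
        rw [hKdef] at hn
        refine span_induction (p := fun n _ => B n z = 0) ?_ (by show B 0 z = 0; simp) ?_ ?_ hn
        · rintro t ⟨a', b', rfl⟩
          show s ((a' * b' - b' * a') * z) = 0
          rw [sub_mul, map_sub, sub_eq_zero]
          have hbz : b' * z = z * b' := ((hmemZ z).mp hz b').symm
          calc s (a' * b' * z) = s (z * (a' * b')) := hsymm _ _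
          _ = s (z * a' * b') := by rw [mul_assoc]
          _ = s (b' * (z * a')) := hsymm _ _
          _ = s (b' * z * a') := by rw [mul_assoc]
          _ = s (z * b' * a') := by rw [hbz]
          _ = s (z * (b' * a')) := by rw [mul_assoc]
          _ = s (b' * a' * z) := (hsymm _ _).symm
        · intro u v _ _ hu hv
          show B (u + v) z = 0
          rw [map_add, LinearMap.add_apply, hu, hv, add_zero]
        · intro c u _ hu
          show B (c • u) z = 0
          rw [map_smul, LinearMap.smul_apply, hu, smul_zero]
    have hfZK : finrank k ↥Z + finrank k ↥K = 5 := by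
      have horth := LinearMap.BilinForm.finrank_orthogonal hBnd K
      rw [hZorth, hdim] at horth
      have hK5 : finrank k ↥K ≤ 5 := hdim ▸ Submodule.finrank_le _
      omega
    have hfK2 : finrank k ↥K ≤ 2 := by
      have := Submodule.finrank_mono hKJ2
      omega
    have hzex : ∃ z, z ∈ Z ∧ z ∈ J ∧ z ∉ (J ^ 2 : Submodule k R) := by
      by_contra hcon
      push_neg at hcon
      have hZJ : Z ⊓ J ≤ (J ^ 2 : Submodule k R) := by
        rintro t ⟨h1', h2'⟩
        exact hcon t h1' h2'
      have hsupZJ := Submodule.finrank_sup_add_finrank_inf_eq Z J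
      have hZJ5 : finrank k ↥(Z ⊔ J) ≤ 5 := hdim ▸ Submodule.finrank_le _
      have hZJ2le : finrank k ↥(Z ⊓ J) ≤ n2 := hn2 ▸ Submodule.finrank_mono hZJ
      have hJ2Z : (J ^ 2 : Submodule k R) ≤ Z := by
        have hinfJ2 : Z ⊓ J = (J ^ 2 : Submodule k R) :=
          Submodule.eq_of_le_of_finrank_le hZJ (by omega)
        rw [← hinfJ2]
        exact inf_le_left
      obtain ⟨x, hxJ, hxn⟩ := SetLike.not_le_iff_exists.mp
        (show ¬J ≤ (J ^ 2 : Submodule k R) from fun hle => by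
          have := Submodule.finrank_mono hle; omega)
      have hQdim := dim_sup_singleton (k := k) hxn
      obtain ⟨y, hyJ, hyn⟩ := SetLike.not_le_iff_exists.mp
        (show ¬J ≤ span k {x} ⊔ (J ^ 2 : Submodule k R) from fun hle => by
          have := Submodule.finrank_mono hle; rw [hQdim] at this; omega)
      have hQdim2 := dim_sup_singleton (k := k) hyn
      have hJeq : span k {y} ⊔ (span k {x} ⊔ (J ^ 2 : Submodule k R)) = J := by
        refine Submodule.eq_of_le_of_finrank_le
          (sup_le (span_le.mpr (Set.singleton_subset_iff.mpr hyJ))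
            (sup_le (span_le.mpr (Set.singleton_subset_iff.mpr hxJ)) hJ21)) ?_
        rw [hQdim2, hQdim]
        omega
      have hK1 : K ≤ span k {x * y - y * x} := by
        rw [hKdef, span_le]
        rintro t ⟨a', b', rfl⟩
        obtain ⟨c, a1, ha1, rfl⟩ := hsp a'
        obtain ⟨d, b1, hb1, rfl⟩ := hsp b'
        rw [← hJeq] at ha1 hb1
        obtain ⟨ya, hya, ra, hra, rfl⟩ := Submodule.mem_sup.mp ha1
        obtain ⟨xa, hxa, ca, hca, rfl⟩ := Submodule.mem_sup.mp hra
        obtain ⟨β, rfl⟩ := mem_span_singleton.mp hya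
        obtain ⟨α, rfl⟩ := mem_span_singleton.mp hxa
        obtain ⟨yb, hyb, rb, hrb, rfl⟩ := Submodule.mem_sup.mp hb1
        obtain ⟨xb, hxb, cb, hcb, rfl⟩ := Submodule.mem_sup.mp hrb
        obtain ⟨β', rfl⟩ := mem_span_singleton.mp hyb
        obtain ⟨α', rfl⟩ := mem_span_singleton.mp hxb
        have hwZ : ∀ r, (c • (1 : R) + ca) * r = r * (c • (1 : R) + ca) := by
          intro r
          rw [add_mul, mul_add, hone_c, (hmemZ ca).mp (hJ2Z hca) r]
        have hwZ' : ∀ r, (d • (1 : R) + cb) * r = r * (d • (1 : R) + cb) := by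
          intro r
          rw [add_mul, mul_add, hone_c, (hmemZ cb).mp (hJ2Z hcb) r]
        have e1 : c • (1 : R) + (β • y + (α • x + ca)) = (α • x + β • y) + (c • (1 : R) + ca) := by
          abel
        have e2 : d • (1 : R) + (β' • y + (α' • x + cb)) =
            (α' • x + β' • y) + (d • (1 : R) + cb) := by abel
        show _ ∈ span k {x * y - y * x}
        rw [e1, e2, comm_cancel hwZ hwZ', comm_smul]
        exact Submodule.smul_mem _ _ (mem_span_singleton_self _)
      have hK1f : finrank k ↥K ≤ 1 := by
        have hm := Submodule.finrank_mono hK1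
        have hs1 : finrank k ↥(span k {x * y - y * x}) ≤ 1 := by
          rcases eq_or_ne (x * y - y * x) 0 with hh | hh
          · rw [hh, Submodule.span_zero_singleton, finrank_bot]
            omega
          · rw [finrank_span_singleton hh]
        omega
      omega
    obtain ⟨z, hzZ, hzJ, hzn⟩ := hzex
    have hQdim := dim_sup_singleton (k := k) hzn
    obtain ⟨w, hwJ, hwn⟩ := SetLike.not_le_iff_exists.mp
      (show ¬J ≤ span k {z} ⊔ (J ^ 2 : Submodule k R) from fun hle => by
        have := Submodule.finrank_mono hle; rw [hQdim] at this; omega)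
    have hQdim2 := dim_sup_singleton (k := k) hwn
    have hJeq : span k {w} ⊔ (span k {z} ⊔ (J ^ 2 : Submodule k R)) = J := by
      refine Submodule.eq_of_le_of_finrank_le
        (sup_le (span_le.mpr (Set.singleton_subset_iff.mpr hwJ))
          (sup_le (span_le.mpr (Set.singleton_subset_iff.mpr hzJ)) hJ21)) ?_
      rw [hQdim2, hQdim]
      omega
    obtain ⟨c, a1, ha1, hae⟩ := hsp a
    obtain ⟨d, b1, hb1, hbe⟩ := hsp b
    rw [← hJeq] at ha1 hb1
    obtain ⟨wa, hwa, ra, hra, ha1e⟩ := Submodule.mem_sup.mp ha1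
    obtain ⟨za, hza, ca, hca, hrae⟩ := Submodule.mem_sup.mp hra
    obtain ⟨γ, rfl⟩ := mem_span_singleton.mp hwa
    obtain ⟨δ, rfl⟩ := mem_span_singleton.mp hza
    obtain ⟨wb, hwb, rb, hrb, hb1e⟩ := Submodule.mem_sup.mp hb1
    obtain ⟨zb, hzb, cb, hcb, hrbe⟩ := Submodule.mem_sup.mp hrb
    obtain ⟨γ', rfl⟩ := mem_span_singleton.mp hwb
    obtain ⟨δ', rfl⟩ := mem_span_singleton.mp hzb
    have hz1 : ∀ r, (c • (1 : R) + δ • z) * r = r * (c • (1 : R) + δ • z) := by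
      intro r
      simp only [add_mul, mul_add, smul_mul_assoc, mul_smul_comm, one_mul, mul_one,
        (hmemZ z).mp hzZ r]
    have hz2 : ∀ r, (d • (1 : R) + δ' • z) * r = r * (d • (1 : R) + δ' • z) := by
      intro r
      simp only [add_mul, mul_add, smul_mul_assoc, mul_smul_comm, one_mul, mul_one,
        (hmemZ z).mp hzZ r]
    have heq : a * b - b * a = (γ • w + ca) * (γ' • w + cb) - (γ' • w + cb) * (γ • w + ca) := by
      rw [hae, hbe, ← ha1e, ← hrae, ← hb1e, ← hrbe]
      have e1 : c • (1 : R) + (γ • w + (δ • z + ca)) = (γ • w + ca) + (c • (1 : R) + δ • z) := by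
        abel
      have e2 : d • (1 : R) + (γ' • w + (δ' • z + cb)) =
          (γ' • w + cb) + (d • (1 : R) + δ' • z) := by abel
      rw [e1, e2, comm_cancel hz1 hz2]
    have hJ3e : (J ^ 3 : Submodule k R) = J * J ^ 2 := pow_succ' J 2
    have hJ3e' : (J ^ 3 : Submodule k R) = J ^ 2 * J := pow_succ J 2
    have hmem3 : a * b - b * a ∈ (J ^ 3 : Submodule k R) := by
      rw [heq, comm_expand]
      have t1 : w * cb ∈ (J ^ 3 : Submodule k R) := by
        rw [hJ3e]; exact Submodule.mul_mem_mul hwJ hcb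
      have t2 : cb * w ∈ (J ^ 3 : Submodule k R) := by
        rw [hJ3e']; exact Submodule.mul_mem_mul hcb hwJ
      have t3 : ca * w ∈ (J ^ 3 : Submodule k R) := by
        rw [hJ3e']; exact Submodule.mul_mem_mul hca hwJ
      have t4 : w * ca ∈ (J ^ 3 : Submodule k R) := by
        rw [hJ3e]; exact Submodule.mul_mem_mul hwJ hca
      have hJ43 : (J ^ 4 : Submodule k R) ≤ (J ^ 3 : Submodule k R) := pow_succ_le hl hr_ 2
      have hJ4e : (J ^ 4 : Submodule k R) = J ^ 2 * J ^ 2 := pow_add J 2 2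
      have t5 : ca * cb ∈ (J ^ 3 : Submodule k R) := by
        refine hJ43 ?_
        rw [hJ4e]; exact Submodule.mul_mem_mul hca hcb
      have t6 : cb * ca ∈ (J ^ 3 : Submodule k R) := by
        refine hJ43 ?_
        rw [hJ4e]; exact Submodule.mul_mem_mul hcb hca
      exact add_mem (add_mem (Submodule.smul_mem _ _ (sub_mem t1 t2))
        (Submodule.smul_mem _ _ (sub_mem t3 t4))) (sub_mem t5 t6)
    exact hgoal (hsoczero _ (hJ3soc hmem3) hsw)
  · -- dim J² = 3 : J is generated by one element
    obtain ⟨x, hxJ, hxn⟩ := SetLike.not_le_iff_exists.mp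
      (show ¬J ≤ (J ^ 2 : Submodule k R) from fun hle => by
        have := Submodule.finrank_mono hle; omega)
    have hQdim := dim_sup_singleton (k := k) hxn
    have hJeq : span k {x} ⊔ (J ^ 2 : Submodule k R) = J := by
      refine Submodule.eq_of_le_of_finrank_le
        (sup_le (span_le.mpr (Set.singleton_subset_iff.mpr hxJ)) hJ21) ?_
      rw [hQdim]
      omega
    have hstep : ∀ i : ℕ, (J ^ (i + 1) : Submodule k R) ≤
        span k {x ^ (i + 1)} ⊔ (J ^ (i + 2) : Submodule k R) := by
      intro i
      induction i with
      | zero => simpa [pow_one] using le_of_eq hJeq.symm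
      | succ i ih =>
        calc (J ^ (i + 1 + 1) : Submodule k R) = J ^ (i + 1) * J := pow_succ J (i + 1)
        _ ≤ (span k {x ^ (i + 1)} ⊔ (J ^ (i + 2) : Submodule k R)) *
            (span k {x} ⊔ (J ^ 2 : Submodule k R)) :=
          mul_le_mul' ih (le_of_eq hJeq.symm)
        _ ≤ span k {x ^ (i + 1 + 1)} ⊔ (J ^ (i + 1 + 2) : Submodule k R) := by
          rw [Submodule.sup_mul, Submodule.mul_sup, Submodule.mul_sup]
          refine sup_le (sup_le ?_ ?_) (sup_le ?_ ?_)
          · rw [Submodule.span_mul_span, Set.singleton_mul_singleton, ← pow_succ]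
            exact le_sup_left
          · refine le_sup_of_le_right ?_
            have h1 : span k {x ^ (i + 1)} ≤ (J ^ (i + 1) : Submodule k R) := by
              rw [Submodule.span_singleton_le_iff_mem]
              have : x ^ (i + 1) ∈ J ^ (i + 1) := by
                clear ih
                induction i with
                | zero => simpa [pow_one] using hxJ
                | succ i ihh =>
                  rw [pow_succ x, pow_succ J]
                  exact Submodule.mul_mem_mul ihh hxJ
              exact this
            calc span k {x ^ (i + 1)} * (J ^ 2 : Submodule k R) ≤ J ^ (i + 1) * J ^ 2 :=
              mul_le_mul' h1 le_rfl
            _ = (J ^ (i + 1 + 2) : Submodule k R) := (pow_add J (i + 1) 2).symm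
          · refine le_sup_of_le_right ?_
            calc (J ^ (i + 2) : Submodule k R) * span k {x} ≤ J ^ (i + 2) * J :=
              mul_le_mul' le_rfl (span_le.mpr (Set.singleton_subset_iff.mpr hxJ))
            _ = (J ^ (i + 2 + 1) : Submodule k R) := (pow_succ J (i + 2)).symm
            _ = (J ^ (i + 1 + 2) : Submodule k R) := by
              rw [show i + 2 + 1 = i + 1 + 2 from by omega]
          · refine le_sup_of_le_right ?_
            calc (J ^ (i + 2) : Submodule k R) * J ^ 2 = J ^ (i + 2 + 2) :=
              (pow_add J (i + 2) 2).symm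
            _ ≤ (J ^ (i + 1 + 2) : Submodule k R) := by
              have h := pow_succ_le hl hr_ (i + 2)
              rwa [show i + 2 + 1 = i + 1 + 2 from by omega] at h
    set P := span k (Set.range fun n : ℕ => x ^ n) with hP
    have hpowP : ∀ n : ℕ, span k {x ^ n} ≤ P := fun n =>
      span_le.mpr (Set.singleton_subset_iff.mpr (subset_span ⟨n, rfl⟩))
    have l4 : (J ^ 4 : Submodule k R) ≤ P := by
      have h : (J ^ 4 : Submodule k R) ≤ span k {x ^ 4} ⊔ (J ^ 5 : Submodule k R) := hstep 3
      rw [hJ5, sup_bot_eq] at h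
      exact le_trans h (hpowP 4)
    have l3 : (J ^ 3 : Submodule k R) ≤ P :=
      le_trans (show (J ^ 3 : Submodule k R) ≤ span k {x ^ 3} ⊔ (J ^ 4 : Submodule k R) from
        hstep 2) (sup_le (hpowP 3) l4)
    have l2 : (J ^ 2 : Submodule k R) ≤ P :=
      le_trans (show (J ^ 2 : Submodule k R) ≤ span k {x ^ 2} ⊔ (J ^ 3 : Submodule k R) from
        hstep 1) (sup_le (hpowP 2) l3)
    have l1 : J ≤ P := by
      have h : (J ^ 1 : Submodule k R) ≤ span k {x ^ 1} ⊔ (J ^ 2 : Submodule k R) := hstep 0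
      rw [pow_one, pow_one] at h
      exact le_trans h (sup_le (span_le.mpr (Set.singleton_subset_iff.mpr
        (subset_span ⟨1, pow_one x⟩))) l2)
    have haP : ∀ r : R, r ∈ P := by
      intro r
      obtain ⟨e, j, hj, rfl⟩ := hsp r
      exact add_mem (Submodule.smul_mem _ e (subset_span ⟨0, pow_zero x⟩)) (l1 hj)
    refine comm_span (X := Set.range fun n : ℕ => x ^ n) ?_ a (haP a) b (haP b)
    rintro u ⟨m, rfl⟩ v ⟨n, rfl⟩
    rw [← pow_add, ← pow_add, add_comm]
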